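/- arXiv:2009.10041 — 3 statements merged into one kernel-verified Lean document; each statement's English description precedes it below -/
import Mathlib

section
/- Let M be a monad on a category C. Suppose C has coequalizers of reflexive pairs and the underlying endofunctor of M preserves them. Then the Eilenberg–Moore category Alg(M) of M-algebras has coequalizers of reflexive pairs, and the forgetful functor U^M : Alg(M) ⥤ C preserves them. -/
open CategoryTheory CategoryTheory.Limits

universe v u

variable {C : Type u} [Category.{v} C]

lemma algebra_aux (M : Monad C) [HasReflexiveCoequalizers C]
    (hM : ∀ ⦃A B : C⦄ (f g : A ⟶ B), IsReflexivePair f g →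
      PreservesColimit (parallelPair f g) (M : C ⥤ C))
    {X Y : M.Algebra} (f g : X ⟶ Y) (hfg : IsReflexivePair f g) :
    HasColimit (parallelPair f g) ∧ PreservesColimit (parallelPair f g) M.forget := by
  obtain ⟨s, hsf, hsg⟩ := hfg
  have hsf' : s.f ≫ f.f = 𝟙 Y.A := congrArg Monad.Algebra.Hom.f hsf
  have hsg' : s.f ≫ g.f = 𝟙 Y.A := congrArg Monad.Algebra.Hom.f hsg
  have hC : IsReflexivePair f.f g.f := IsReflexivePair.mk' s.f hsf' hsg'
  have hCM : IsReflexivePair (M.map f.f) (M.map g.f) :=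
    IsReflexivePair.mk' (M.map s.f) (by rw [← M.map_comp, hsf', M.map_id])
      (by rw [← M.map_comp, hsg', M.map_id])
  have e1 : parallelPair f g ⋙ M.forget ≅ parallelPair f.f g.f :=
    diagramIsoParallelPair _
  have e2 : (parallelPair f g ⋙ M.forget) ⋙ (M : C ⥤ C) ≅
      parallelPair (M.map f.f) (M.map g.f) := diagramIsoParallelPair _
  haveI : HasCoequalizer f.f g.f := HasReflexiveCoequalizers.has_coeq f.f g.f
  haveI : HasColimit (parallelPair f g ⋙ M.forget) := hasColimit_of_iso e1
  haveI : PreservesColimit (parallelPair f g ⋙ M.forget) (M : C ⥤ C) :=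
    haveI := hM f.f g.f hC; preservesColimit_of_iso_diagram _ e1.symm
  haveI : PreservesColimit ((parallelPair f g ⋙ M.forget) ⋙ (M : C ⥤ C)) (M : C ⥤ C) :=
    haveI := hM _ _ hCM; preservesColimit_of_iso_diagram _ e2.symm
  haveI : CreatesColimit (parallelPair f g) M.forget := Monad.forgetCreatesColimit _
  exact ⟨hasColimit_of_created _ M.forget,
    preservesColimit_of_createsColimit_and_hasColimit _ _⟩

/-- if `C` has coequalizers of reflexive pairs and the monad `M` preserves
them, then the Eilenberg-Moore category of `M`-algebras has coequalizers of reflexive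
pairs and the forgetful functor preserves them. -/
theorem algebra_hasReflexiveCoequalizers (M : Monad C) [HasReflexiveCoequalizers C]
    (hM : ∀ ⦃A B : C⦄ (f g : A ⟶ B), IsReflexivePair f g →
      PreservesColimit (parallelPair f g) (M : C ⥤ C)) :
    HasReflexiveCoequalizers M.Algebra ∧
      ∀ ⦃X Y : M.Algebra⦄ (f g : X ⟶ Y), IsReflexivePair f g →
        PreservesColimit (parallelPair f g) M.forget := by
  exact ⟨⟨fun _ _ f g _ => (algebra_aux M hM f g ‹_›).1⟩,
    fun _ _ f g h => (algebra_aux M hM f g h).2⟩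
end

section
/- Let Q be a comonad on a complete category C whose underlying endofunctor preserves equalizers of coreflexive pairs. Then the category Coalg(Q) of Q-coalgebras is complete (has all small limits). -/
open CategoryTheory CategoryTheory.Limits

universe v u

variable {C : Type u} [Category.{v} C]

section Aux

variable {D : Type*} [Category D]

lemma isCoreflexivePair_map (F : C ⥤ D) {A B : C} (f g : A ⟶ B)
    (h : IsCoreflexivePair f g) : IsCoreflexivePair (F.map f) (F.map g) := by
  letI := h
  exact IsCoreflexivePair.mk' (F.map (commonRetraction f g))
    (by rw [← F.map_comp, left_comp_retraction, F.map_id])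
    (by rw [← F.map_comp, right_comp_retraction, F.map_id])

/-- If a functor preserves equalizers of all coreflexive parallel pairs, it preserves limits of
any `WalkingParallelPair`-diagram whose two maps form a coreflexive pair. -/
lemma preservesEqualizer_of_coreflexive (G : C ⥤ D)
    (hG : ∀ ⦃A B : C⦄ (f g : A ⟶ B), IsCoreflexivePair f g →
      PreservesLimit (parallelPair f g) G)
    (F : WalkingParallelPair ⥤ C)
    (h : IsCoreflexivePair (F.map WalkingParallelPairHom.left)
      (F.map WalkingParallelPairHom.right)) : PreservesLimit F G := by
  letI := hG _ _ h
  exact preservesLimit_of_iso_diagram G (diagramIsoParallelPair F).symm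

lemma app_coreflexive {J : Type*} [Category J] {X Y : J ⥤ C} (φ ψ : X ⟶ Y)
    (h : IsCoreflexivePair φ ψ) (k : J) : IsCoreflexivePair (φ.app k) (ψ.app k) := by
  letI := h
  exact IsCoreflexivePair.mk' ((commonRetraction φ ψ).app k)
    (by rw [← NatTrans.comp_app, left_comp_retraction]; rfl)
    (by rw [← NatTrans.comp_app, right_comp_retraction]; rfl)

end Aux

section CoalgAux

variable (Q : Comonad C)

/-- The forgetful functor creates limits of coreflexive parallel pairs of coalgebras, assuming
the comonad preserves coreflexive equalizers. -/
noncomputable def forgetCreatesCoreflexiveEqualizer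
    (hQ : ∀ ⦃A B : C⦄ (f g : A ⟶ B), IsCoreflexivePair f g →
      PreservesLimit (parallelPair f g) (Q : C ⥤ C))
    {X Y : Q.Coalgebra} (f g : X ⟶ Y) (h : IsCoreflexivePair f g) :
    CreatesLimit (parallelPair f g) (Comonad.forget Q) := by
  have h1 : IsCoreflexivePair ((parallelPair f g ⋙ Comonad.forget Q).map
      WalkingParallelPairHom.left) ((parallelPair f g ⋙ Comonad.forget Q).map
      WalkingParallelPairHom.right) :=
    isCoreflexivePair_map (Comonad.forget Q) f g h
  have h2 : IsCoreflexivePair (((parallelPair f g ⋙ Comonad.forget Q) ⋙ (Q : C ⥤ C)).map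
      WalkingParallelPairHom.left) (((parallelPair f g ⋙ Comonad.forget Q) ⋙ (Q : C ⥤ C)).map
      WalkingParallelPairHom.right) :=
    isCoreflexivePair_map (Q : C ⥤ C) _ _ h1
  letI : PreservesLimit (parallelPair f g ⋙ Comonad.forget Q) (Q : C ⥤ C) :=
    preservesEqualizer_of_coreflexive _ hQ _ h1
  letI : PreservesLimit ((parallelPair f g ⋙ Comonad.forget Q) ⋙ (Q : C ⥤ C)) (Q : C ⥤ C) :=
    preservesEqualizer_of_coreflexive _ hQ _ h2
  exact Comonad.forgetCreatesLimit _

lemma coalgebra_hasCoreflexiveEqualizers [HasLimits C]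
    (hQ : ∀ ⦃A B : C⦄ (f g : A ⟶ B), IsCoreflexivePair f g →
      PreservesLimit (parallelPair f g) (Q : C ⥤ C)) :
    HasCoreflexiveEqualizers Q.Coalgebra where
  has_eq X Y f g h := by
    letI : CreatesLimit (parallelPair f g) (Comonad.forget Q) :=
      forgetCreatesCoreflexiveEqualizer Q hQ f g h
    exact hasLimit_of_created (parallelPair f g) (Comonad.forget Q)

/-- The forgetful functor preserves limits of coreflexive parallel pairs of coalgebras. -/
lemma forget_preservesCoreflexiveEqualizer [HasLimits C]
    (hQ : ∀ ⦃A B : C⦄ (f g : A ⟶ B), IsCoreflexivePair f g →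
      PreservesLimit (parallelPair f g) (Q : C ⥤ C))
    (F : WalkingParallelPair ⥤ Q.Coalgebra)
    (h : IsCoreflexivePair (F.map WalkingParallelPairHom.left)
      (F.map WalkingParallelPairHom.right)) : PreservesLimit F (Comonad.forget Q) := by
  refine preservesEqualizer_of_coreflexive _ (fun A B f g h => ?_) F h
  letI : CreatesLimit (parallelPair f g) (Comonad.forget Q) :=
    forgetCreatesCoreflexiveEqualizer Q hQ f g h
  letI : HasLimit (parallelPair f g) :=
    hasLimit_of_created (parallelPair f g) (Comonad.forget Q)
  infer_instance

end CoalgAux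

/-- if `C` is complete and the comonad `Q` preserves equalizers of
coreflexive pairs, then the category of `Q`-coalgebras is complete. -/
theorem coalgebra_hasLimits (Q : Comonad C) [HasLimits C]
    (hQ : ∀ ⦃A B : C⦄ (f g : A ⟶ B), IsCoreflexivePair f g →
      PreservesLimit (parallelPair f g) (Q : C ⥤ C)) :
    HasLimits Q.Coalgebra := by
  letI : HasCoreflexiveEqualizers Q.Coalgebra := coalgebra_hasCoreflexiveEqualizers Q hQ
  constructor
  intro J hJ
  rw [hasLimitsOfShape_iff_isLeftAdjoint_const]
  let F : (J ⥤ Q.Coalgebra) ⥤ (J ⥤ C) := (Functor.whiskeringRight J _ _).obj (Comonad.forget Q)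
  let adjW : F ⊣ (Functor.whiskeringRight J _ _).obj (Comonad.cofree Q) :=
    Adjunction.whiskerRight J (Comonad.adj Q)
  -- pointwise limits of coreflexive pairs in the functor category
  have hasLim : ∀ {X Y : J ⥤ Q.Coalgebra} (φ ψ : X ⟶ Y), IsCoreflexivePair φ ψ →
      ∀ k : J, HasLimit ((parallelPair φ ψ).flip.obj k) := by
    intro X Y φ ψ h k
    letI : IsCoreflexivePair (φ.app k) (ψ.app k) := app_coreflexive φ ψ h k
    letI : HasLimit (parallelPair (φ.app k) (ψ.app k)) := inferInstance
    exact hasLimit_of_iso (F := parallelPair (φ.app k) (ψ.app k))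
      (diagramIsoParallelPair ((parallelPair φ ψ).flip.obj k)).symm
  letI : HasCoreflexiveEqualizers (J ⥤ Q.Coalgebra) := by
    constructor
    intro X Y φ ψ h
    letI := hasLim φ ψ h
    infer_instance
  letI : F.ReflectsIsomorphisms := by
    constructor
    intro X Y f hf
    rw [NatTrans.isIso_iff_isIso_app]
    intro j
    have h2 : IsIso ((Comonad.forget Q).map (f.app j)) :=
      (NatTrans.isIso_iff_isIso_app (F.map f)).mp hf j
    exact isIso_of_reflects_iso (f.app j) (Comonad.forget Q)
  letI : Comonad.PreservesLimitOfIsCoreflexivePair F := by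
    constructor
    intro X Y φ ψ h
    letI := hasLim φ ψ h
    apply preservesLimit_of_evaluation
    intro k
    letI : PreservesLimit (parallelPair φ ψ) ((evaluation J Q.Coalgebra).obj k) :=
      inferInstance
    letI : PreservesLimit (parallelPair φ ψ ⋙ (evaluation J Q.Coalgebra).obj k)
        (Comonad.forget Q) := by
      apply forget_preservesCoreflexiveEqualizer Q hQ
      exact app_coreflexive φ ψ h k
    letI : PreservesLimit (parallelPair φ ψ)
        ((evaluation J Q.Coalgebra).obj k ⋙ Comonad.forget Q) := comp_preservesLimit _ _
    have e : ((evaluation J Q.Coalgebra).obj k ⋙ Comonad.forget Q : (J ⥤ Q.Coalgebra) ⥤ C) ≅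
        F ⋙ (evaluation J C).obj k :=
      NatIso.ofComponents (fun X => Iso.refl _) (by intros; simp [F]; exact (Category.comp_id _).trans (Category.id_comp _).symm)
    exact preservesLimit_of_natIso (parallelPair φ ψ) e
  letI : ComonadicLeftAdjoint F :=
    Comonad.comonadicOfHasPreservesCoreflexiveEqualizersOfReflectsIsomorphisms adjW
  letI : ((Functor.const J : Q.Coalgebra ⥤ _) ⋙ F).IsLeftAdjoint := by
    have a1 : (Comonad.forget Q ⋙ Functor.const J) ⊣ (lim ⋙ Comonad.cofree Q) :=
      (Comonad.adj Q).comp constLimAdj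
    refine (a1.ofNatIsoLeft ?_).isLeftAdjoint
    exact NatIso.ofComponents
      (fun X => (Functor.constComp J X (Comonad.forget Q)).symm)
      (by intro X Y f; ext j; simp [F, Functor.constComp]; exact (Category.id_comp _).symm)
  exact isLeftAdjoint_triangle_lift_comonadic F
end

section
/- Let Q, R, O be comonads on categories C, D, E respectively. Let B : C ⥤ D ⥤ E be a bifunctor equipped with a lift to coalgebras, i.e. a bifunctor B̃ : Coalg(Q) ⥤ Coalg(R) ⥤ Coalg(O) such that for every Q-coalgebra V and R-coalgebra W, the underlying object of B̃(V)(W) is B(U_Q V)(U_R W), compatibly with the forgetful functors on morphisms in both variables. Suppose that for every object X of C the functor B(X) : D ⥤ E has a right adjoint, that D has equalizers of coreflexive pairs, and that the underlying endofunctor of R preserves them. Then for every Q-coalgebra V, the lifted functor B̃(V) : Coalg(R) ⥤ Coalg(O) has a right adjoint. -/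
open CategoryTheory CategoryTheory.Limits

universe v₁ v₂ v₃ u₁ u₂ u₃

namespace Paper

variable {C : Type u₁} [Category.{v₁} C] {D : Type u₂} [Category.{v₂} D]
  {E : Type u₃} [Category.{v₃} E]

/-- The forgetful functor of a comonad maps coreflexive pairs to coreflexive pairs. -/
lemma forget_coreflexive {R : Comonad D} {V W : R.Coalgebra} (f g : V ⟶ W)
    [IsCoreflexivePair f g] : IsCoreflexivePair f.f g.f := by
  obtain ⟨s, hs1, hs2⟩ := IsCoreflexivePair.common_retraction f g
  exact IsCoreflexivePair.mk' s.f (congrArg Comonad.Coalgebra.Hom.f hs1)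
    (congrArg Comonad.Coalgebra.Hom.f hs2)

/-- If `D` has coreflexive equalizers and the comonad `R` preserves them, then the
category of `R`-coalgebras has coreflexive equalizers. -/
lemma coalgebra_hasCoreflexiveEqualizers (R : Comonad D) [HasCoreflexiveEqualizers D]
    (hR : ∀ ⦃A A' : D⦄ (f g : A ⟶ A'), IsCoreflexivePair f g →
      PreservesLimit (parallelPair f g) (R : D ⥤ D)) :
    HasCoreflexiveEqualizers R.Coalgebra := by
  constructor
  intro V W f g hfg
  haveI : IsCoreflexivePair f.f g.f := forget_coreflexive f g
  haveI : IsCoreflexivePair ((R : D ⥤ D).map f.f) ((R : D ⥤ D).map g.f) :=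
    IsCoreflexivePair.mk' ((R : D ⥤ D).map (commonRetraction f.f g.f))
      (by rw [← (R : D ⥤ D).map_comp, left_comp_retraction, (R : D ⥤ D).map_id])
      (by rw [← (R : D ⥤ D).map_comp, right_comp_retraction, (R : D ⥤ D).map_id])
  haveI h1 : PreservesLimit (parallelPair f.f g.f) (R : D ⥤ D) := hR _ _ inferInstance
  haveI h2 : PreservesLimit (parallelPair ((R : D ⥤ D).map f.f) ((R : D ⥤ D).map g.f))
      (R : D ⥤ D) := hR _ _ inferInstance
  let e1 : parallelPair f.f g.f ≅ parallelPair f g ⋙ R.forget :=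
    parallelPair.ext (Iso.refl _) (Iso.refl _) (by simp; exact (Category.comp_id _).trans (Category.id_comp _).symm) (by simp; exact (Category.comp_id _).trans (Category.id_comp _).symm)
  let e2 : parallelPair ((R : D ⥤ D).map f.f) ((R : D ⥤ D).map g.f) ≅
      (parallelPair f g ⋙ R.forget) ⋙ (R : D ⥤ D) :=
    parallelPair.ext (Iso.refl _) (Iso.refl _) (by simp; exact (Category.comp_id _).trans (Category.id_comp _).symm) (by simp; exact (Category.comp_id _).trans (Category.id_comp _).symm)
  haveI : PreservesLimit (parallelPair f g ⋙ R.forget) (R : D ⥤ D) :=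
    preservesLimit_of_iso_diagram _ e1
  haveI : PreservesLimit ((parallelPair f g ⋙ R.forget) ⋙ (R : D ⥤ D)) (R : D ⥤ D) :=
    preservesLimit_of_iso_diagram _ e2
  haveI : HasLimit (parallelPair f g ⋙ R.forget) := hasLimit_of_iso e1
  exact hasLimit_of_created (parallelPair f g) R.forget

/-- given a bifunctor `B : C ⥤ D ⥤ E` lifted to coalgebras over comonads
`Q`, `R`, `O`, if each `B(X)` has a right adjoint, `D` has coreflexive equalizers and `R`
preserves them, then each lifted functor `B̃(V)` has a right adjoint. -/
theorem lifted_bifunctor_isLeftAdjoint (Q : Comonad C) (R : Comonad D) (O : Comonad E)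
    (B : C ⥤ D ⥤ E) (B' : Q.Coalgebra ⥤ R.Coalgebra ⥤ O.Coalgebra)
    (hB : B' ⋙ (Functor.whiskeringRight R.Coalgebra O.Coalgebra E).obj O.forget =
      Q.forget ⋙ B ⋙ (Functor.whiskeringLeft R.Coalgebra D E).obj R.forget)
    (hadj : ∀ X : C, (B.obj X).IsLeftAdjoint)
    [HasCoreflexiveEqualizers D]
    (hR : ∀ ⦃A A' : D⦄ (f g : A ⟶ A'), IsCoreflexivePair f g →
      PreservesLimit (parallelPair f g) (R : D ⥤ D)) :
    ∀ V : Q.Coalgebra, (B'.obj V).IsLeftAdjoint := by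
  intro V
  haveI : HasCoreflexiveEqualizers R.Coalgebra := coalgebra_hasCoreflexiveEqualizers R hR
  have hVB : B'.obj V ⋙ O.forget = R.forget ⋙ B.obj V.A := congrArg (·.obj V) hB
  haveI : (B.obj V.A).IsLeftAdjoint := hadj V.A
  haveI : (R.forget ⋙ B.obj V.A).IsLeftAdjoint := Functor.isLeftAdjoint_comp _ _
  haveI : (B'.obj V ⋙ O.forget).IsLeftAdjoint := hVB ▸ this
  exact isLeftAdjoint_triangle_lift_comonadic O.forget
end Paper
end
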